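/- For every odd integer n ≥ 11, the tail ζ*_n(4) = Σ_{k=n}^∞ (-1)^{k+1}/k^4 satisfies 1/(2n^4-4n^3+8n^2-6n-7) < ζ*_n(4) < 1/(2n^4-4n^3+8n^2-6n-8), and consequently ⌊ζ*_n(4)^{-1}⌋ = 2n^4-4n^3+8n^2-6n-8. -/

import Mathlib

open Filter Topology

private noncomputable def qq (c : ℝ) (x : ℝ) : ℝ := 2*x^4 - 4*x^3 + 8*x^2 - 6*x - c

private lemma qq_pos {c x : ℝ} (hc : c ≤ 8) (hx : 11 ≤ x) : 0 < qq c x := by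
  unfold qq; nlinarith [sq_nonneg x, sq_nonneg (x-1)]

private lemma key7 {x : ℝ} (hx : 11 ≤ x) :
    1 / qq 7 x - 1 / qq 7 (x + 2) < 1 / x^4 - 1 / (x+1)^4 := by
  have h0 : 0 < qq 7 x := qq_pos (by norm_num) hx
  have h2 : 0 < qq 7 (x+2) := qq_pos (by norm_num) (by linarith)
  have hx0 : (0:ℝ) < x^4 := by positivity
  have hx1 : (0:ℝ) < (x+1)^4 := by positivity
  rw [div_sub_div _ _ (ne_of_gt h0) (ne_of_gt h2), div_sub_div _ _ (ne_of_gt hx0) (ne_of_gt hx1),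
    div_lt_div_iff₀ (by positivity) (by positivity)]
  have ht : (0:ℝ) ≤ x - 11 := by linarith
  unfold qq
  nlinarith [pow_nonneg ht 2, pow_nonneg ht 3, pow_nonneg ht 4, pow_nonneg ht 5,
    pow_nonneg ht 6, pow_nonneg ht 7, ht]

private lemma key8 {x : ℝ} (hx : 11 ≤ x) :
    1 / x^4 - 1 / (x+1)^4 < 1 / qq 8 x - 1 / qq 8 (x + 2) := by
  have h0 : 0 < qq 8 x := qq_pos le_rfl hx
  have h2 : 0 < qq 8 (x+2) := qq_pos le_rfl (by linarith)
  have hx0 : (0:ℝ) < x^4 := by positivity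
  have hx1 : (0:ℝ) < (x+1)^4 := by positivity
  rw [div_sub_div _ _ (ne_of_gt hx0) (ne_of_gt hx1), div_sub_div _ _ (ne_of_gt h0) (ne_of_gt h2),
    div_lt_div_iff₀ (by positivity) (by positivity)]
  have hxp : (0:ℝ) < x := by linarith
  unfold qq
  nlinarith [pow_pos hxp 2, pow_pos hxp 3, pow_pos hxp 4, pow_pos hxp 5, hxp]

private lemma telescope_hasSum (f : ℕ → ℝ) (hmono : ∀ j, f (j+1) ≤ f j)
    (h0 : Filter.Tendsto f atTop (nhds 0)) :
    HasSum (fun j => f j - f (j+1)) (f 0) := by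
  rw [hasSum_iff_tendsto_nat_of_nonneg (fun j => by linarith [hmono j]) _]
  have h : ∀ N, ∑ i ∈ Finset.range N, (f i - f (i+1)) = f 0 - f N :=
    fun N => Finset.sum_range_sub' f N
  simp only [h]
  simpa using (tendsto_const_nhds (x := f 0)).sub h0

private lemma sum_major : Summable (fun j : ℕ => 1 / ((j:ℝ)+1)^2) := by
  have := (summable_nat_add_iff (f := fun j : ℕ => 1 / (j:ℝ)^2) 1).2
    (Real.summable_one_div_nat_pow.2 one_lt_two)
  simpa using this

private lemma qq_tele {c : ℝ} (hc : c ≤ 8) {y : ℝ} (hy : 11 ≤ y) :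
    HasSum (fun j : ℕ => 1 / qq c (y + 2*j) - 1 / qq c ((y + 2*j) + 2)) (1 / qq c y) := by
  have hx : ∀ j : ℕ, (11:ℝ) ≤ y + 2*j := fun j => by
    have : (0:ℝ) ≤ j := Nat.cast_nonneg j; linarith
  have hmono : ∀ j : ℕ, 1 / qq c (y + 2*((j:ℕ)+1:ℕ)) ≤ 1 / qq c (y + 2*j) := by
    intro j
    apply one_div_le_one_div_of_le (qq_pos hc (hx j))
    have := hx j
    push_cast
    unfold qq; nlinarith [Nat.cast_nonneg (α := ℝ) j]
  have htend : Tendsto (fun j : ℕ => 1 / qq c (y + 2*(j:ℝ))) atTop (nhds 0) := by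
    apply squeeze_zero (g := fun j : ℕ => 1 / ((j:ℝ)+1))
      (fun j => (one_div_pos.2 (qq_pos hc (hx j))).le)
    · intro j
      apply one_div_le_one_div_of_le (by positivity)
      have h11 := hx j
      have h1 : (j:ℝ)+1 ≤ y + 2*j := by
        have : (0:ℝ) ≤ j := Nat.cast_nonneg j; linarith
      have ht : (0:ℝ) ≤ (y + 2*j) - 11 := by linarith
      unfold qq
      nlinarith [h1, pow_nonneg ht 2, pow_nonneg ht 3, pow_nonneg ht 4]
    · exact tendsto_one_div_add_atTop_nhds_zero_nat
  have key := telescope_hasSum (fun j => 1 / qq c (y + 2*(j:ℝ))) hmono htend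
  have hfe : (fun j : ℕ => 1 / qq c (y + 2*(j:ℝ)) - 1 / qq c (y + 2*((j+1:ℕ):ℝ)))
      = fun j : ℕ => 1 / qq c (y + 2*j) - 1 / qq c ((y + 2*j) + 2) := by
    funext j
    have : y + 2*((j+1:ℕ):ℝ) = (y + 2*j) + 2 := by push_cast; ring
    rw [this]
  rw [hfe] at key
  simpa using key

theorem stmt_17 (n : ℕ) (hn : 11 ≤ n) (hodd : Odd n) :
    (1 / (2 * (n : ℝ)^4 - 4 * n^3 + 8 * n^2 - 6 * n - 7) <
        ∑' k : ℕ, (-1 : ℝ) ^ (n + k + 1) / (n + k) ^ 4 ∧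
      ∑' k : ℕ, (-1 : ℝ) ^ (n + k + 1) / (n + k) ^ 4 <
        1 / (2 * n^4 - 4 * n^3 + 8 * n^2 - 6 * n - 8)) ∧
    ⌊(∑' k : ℕ, (-1 : ℝ) ^ (n + k + 1) / (n + k) ^ 4)⁻¹⌋ =
      2 * (n : ℤ)^4 - 4 * n^3 + 8 * n^2 - 6 * n - 8 := by
  obtain ⟨m, hm⟩ := hodd
  have hy : (11:ℝ) ≤ (n:ℝ) := by exact_mod_cast hn
  have hx : ∀ j : ℕ, (11:ℝ) ≤ (n:ℝ) + 2*j := fun j => by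
    have : (0:ℝ) ≤ j := Nat.cast_nonneg j; linarith
  set u : ℕ → ℝ := fun j => 1 / ((n:ℝ) + 2*j)^4 with hu_def
  set v : ℕ → ℝ := fun j => 1 / (((n:ℝ) + 2*j) + 1)^4 with hv_def
  -- summability of u and v
  have hsu : Summable u := by
    apply Summable.of_nonneg_of_le (fun j => by positivity) _ sum_major
    intro j
    apply one_div_le_one_div_of_le (by positivity)
    have h11 := hx j
    have h1 : ((j:ℝ)+1) ≤ (n:ℝ)+2*j := by
      have : (0:ℝ) ≤ j := Nat.cast_nonneg j; linarith
    have h2 : ((j:ℝ)+1)^2 ≤ ((n:ℝ)+2*j)^2 := by nlinarith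
    have h3 : ((n:ℝ)+2*j)^2 ≤ ((n:ℝ)+2*j)^4 := by
      nlinarith [mul_nonneg (mul_nonneg (sq_nonneg ((n:ℝ)+2*j))
        (by linarith : (0:ℝ) ≤ ((n:ℝ)+2*j) - 1)) (by linarith : (0:ℝ) ≤ ((n:ℝ)+2*j) + 1)]
    linarith
  have hsv : Summable v := by
    apply Summable.of_nonneg_of_le (fun j => by positivity) _ sum_major
    intro j
    apply one_div_le_one_div_of_le (by positivity)
    have h11 := hx j
    have h1 : ((j:ℝ)+1) ≤ (n:ℝ)+2*j+1 := by
      have : (0:ℝ) ≤ j := Nat.cast_nonneg j; linarith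
    have h2 : ((j:ℝ)+1)^2 ≤ ((n:ℝ)+2*j+1)^2 := by nlinarith
    have h3 : ((n:ℝ)+2*j+1)^2 ≤ ((n:ℝ)+2*j+1)^4 := by
      nlinarith [mul_nonneg (mul_nonneg (sq_nonneg ((n:ℝ)+2*j+1))
        (by linarith : (0:ℝ) ≤ ((n:ℝ)+2*j+1) - 1)) (by linarith : (0:ℝ) ≤ ((n:ℝ)+2*j+1) + 1)]
    linarith
  -- the alternating series has sum ∑u - ∑v
  have hF : HasSum (fun k : ℕ => (-1 : ℝ) ^ (n + k + 1) / ((n:ℝ) + k) ^ 4)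
      ((∑' j, u j) - ∑' j, v j) := by
    rw [sub_eq_add_neg]
    apply HasSum.even_add_odd
    · convert hsu.hasSum using 2 with j
      have he : Even (n + 2*j + 1) := ⟨m + j + 1, by omega⟩
      rw [he.neg_one_pow]
      push_cast
      simp [hu_def]
    · convert (show HasSum (fun j => -v j) (-∑' j, v j) from hsv.hasSum.neg) using 2 with j
      have ho : Odd (n + (2*j+1) + 1) := ⟨m + j + 1, by omega⟩
      rw [ho.neg_one_pow]
      push_cast
      simp [hv_def, neg_div]
      ring_nf
  have hFsum := hF.tsum_eq
  have hb : Summable (fun j => u j - v j) := hsu.sub hsv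
  have hT : (∑' j, u j) - (∑' j, v j) = ∑' j, (u j - v j) :=
    ((hsu.hasSum.sub hsv.hasSum).tsum_eq).symm
  rw [hFsum, hT]
  -- telescoping sums
  have h7 := qq_tele (c := 7) (by norm_num) hy
  have h8 := qq_tele (c := 8) le_rfl hy
  have huv : ∀ j : ℕ, u j - v j = 1/((n:ℝ)+2*j)^4 - 1/(((n:ℝ)+2*j)+1)^4 := fun j => rfl
  -- lower bound
  have hlow : 1 / qq 7 (n:ℝ) < ∑' j, (u j - v j) := by
    rw [← h7.tsum_eq]
    apply Summable.tsum_lt_tsum_of_nonneg (i := 0)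
    · intro j
      have h0 := qq_pos (c := 7) (x := (n:ℝ) + 2*j) (by norm_num) (hx j)
      have hmono : qq 7 ((n:ℝ) + 2*j) ≤ qq 7 (((n:ℝ) + 2*j) + 2) := by
        have := hx j
        unfold qq; nlinarith [Nat.cast_nonneg (α := ℝ) j]
      linarith [one_div_le_one_div_of_le h0 hmono]
    · intro j
      rw [huv j]
      linarith [key7 (hx j)]
    · rw [huv 0]
      linarith [key7 (hx 0)]
    · exact hb
  -- upper bound
  have hhigh : (∑' j, (u j - v j)) < 1 / qq 8 (n:ℝ) := by
    rw [← h8.tsum_eq]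
    apply Summable.tsum_lt_tsum_of_nonneg (i := 0)
    · intro j
      have h0 : (0:ℝ) < ((n:ℝ)+2*j)^4 := by
        have := hx j; positivity
      have hle : ((n:ℝ)+2*j)^4 ≤ (((n:ℝ)+2*j)+1)^4 :=
        pow_le_pow_left₀ (by have := hx j; linarith) (by linarith) 4
      have := one_div_le_one_div_of_le h0 hle
      rw [huv j]
      linarith
    · intro j
      rw [huv j]
      linarith [key8 (hx j)]
    · rw [huv 0]
      linarith [key8 (hx 0)]
    · exact h8.summable
  have hq7 : qq 7 (n:ℝ) = 2 * (n:ℝ)^4 - 4 * n^3 + 8 * n^2 - 6 * n - 7 := by unfold qq; ring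
  have hq8 : qq 8 (n:ℝ) = 2 * (n:ℝ)^4 - 4 * n^3 + 8 * n^2 - 6 * n - 8 := by unfold qq; ring
  rw [hq7] at hlow
  rw [hq8] at hhigh
  refine ⟨⟨hlow, hhigh⟩, ?_⟩
  -- floor computation
  set S := ∑' j, (u j - v j) with hS
  have h7pos : (0:ℝ) < 2 * (n:ℝ)^4 - 4 * n^3 + 8 * n^2 - 6 * n - 7 := by
    have := qq_pos (c := 7) (x := (n:ℝ)) (by norm_num) hy
    rw [hq7] at this; exact this
  have h8pos : (0:ℝ) < 2 * (n:ℝ)^4 - 4 * n^3 + 8 * n^2 - 6 * n - 8 := by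
    have := qq_pos (c := 8) (x := (n:ℝ)) le_rfl hy
    rw [hq8] at this; exact this
  have hSpos : 0 < S := lt_trans (by positivity) hlow
  have hinv1 : S⁻¹ < 2 * (n:ℝ)^4 - 4 * n^3 + 8 * n^2 - 6 * n - 7 := by
    rw [← one_div]
    calc 1 / S < 1 / (1 / (2 * (n:ℝ)^4 - 4 * n^3 + 8 * n^2 - 6 * n - 7)) :=
          one_div_lt_one_div_of_lt (by positivity) hlow
      _ = _ := one_div_one_div _
  have hinv2 : 2 * (n:ℝ)^4 - 4 * n^3 + 8 * n^2 - 6 * n - 8 < S⁻¹ := by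
    rw [← one_div]
    calc (2 * (n:ℝ)^4 - 4 * n^3 + 8 * n^2 - 6 * n - 8)
        = 1 / (1 / (2 * (n:ℝ)^4 - 4 * n^3 + 8 * n^2 - 6 * n - 8)) := (one_div_one_div _).symm
      _ < 1 / S := one_div_lt_one_div_of_lt hSpos hhigh
  rw [Int.floor_eq_iff]
  constructor
  · push_cast; linarith
  · push_cast; linarith
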